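/- Let μ and ν be probability measures on a measurable space X, both absolutely continuous with respect to a σ-finite measure λ, with densities f = dμ/dλ and g = dν/dλ. If the function x ↦ f(x)·log(f(x)/(f(x)+g(x))) + g(x)·log(g(x)/(f(x)+g(x))) (with the convention that a term with zero numerator is 0) is λ-integrable, then ∫ (f·log(f/(f+g)) + g·log(g/(f+g))) dλ ≥ −log 4. -/

import Mathlib

open MeasureTheory

/-- Key scalar inequality: for `0 ≤ a`, `0 < s`,
`a - s/2 - a·log 2 ≤ a·log (a/s)`. -/
lemma gan_key_ineq (a s : ℝ) (ha : 0 ≤ a) (hs : 0 < s) :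
    a - s / 2 - a * Real.log 2 ≤ a * Real.log (a / s) := by
  rcases eq_or_lt_of_le ha with h0 | ha'
  · simp [← h0]
    nlinarith
  · have h2a : 0 < 2 * a := by linarith
    have hx : 0 < s / (2 * a) := div_pos hs h2a
    have hlog : Real.log (s / (2 * a)) ≤ s / (2 * a) - 1 :=
      Real.log_le_sub_one_of_pos hx
    have hmul : a * Real.log (s / (2 * a)) ≤ s / 2 - a := by
      have := mul_le_mul_of_nonneg_left hlog ha
      calc a * Real.log (s / (2 * a)) ≤ a * (s / (2 * a) - 1) := this
        _ = s / 2 - a := by field_simp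
    have hid : Real.log (a / s) = -(Real.log (s / (2 * a))) - Real.log 2 := by
      rw [Real.log_div hs.ne' h2a.ne', Real.log_div ha'.ne' hs.ne',
        Real.log_mul (by norm_num) ha'.ne']
      ring
    rw [hid]
    nlinarith

/-- Pointwise lower bound for the GAN integrand. -/
lemma gan_pointwise (a b : ℝ) (ha : 0 ≤ a) (hb : 0 ≤ b) :
    -(a + b) * Real.log 2 ≤
      a * Real.log (a / (a + b)) + b * Real.log (b / (a + b)) := by
  rcases eq_or_lt_of_le (add_nonneg ha hb) with h0 | hs
  · have ha0 : a = 0 := by linarith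
    have hb0 : b = 0 := by linarith
    simp [ha0, hb0]
  · have h1 := gan_key_ineq a (a + b) ha hs
    have h2 := gan_key_ineq b (a + b) hb hs
    nlinarith

/-- The GAN virtual training criterion
`C(G) = ∫ (f·log (f/(f+g)) + g·log (g/(f+g))) dλ` (with `0·log 0 = 0`, which is automatic
here since a term with zero numerator carries a factor `0`) is bounded below by `−log 4`. -/
theorem gan_criterion_ge_neg_log_four
    {X : Type*} [MeasurableSpace X]
    (μ ν lam : Measure X) [IsProbabilityMeasure μ] [IsProbabilityMeasure ν]
    [SigmaFinite lam]
    (hμlam : μ ≪ lam) (hνlam : ν ≪ lam)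
    (f g : X → ℝ) (hf : Measurable f) (hg : Measurable g)
    (hf0 : ∀ x, 0 ≤ f x) (hg0 : ∀ x, 0 ≤ g x)
    (hfd : μ = lam.withDensity fun x => ENNReal.ofReal (f x))
    (hgd : ν = lam.withDensity fun x => ENNReal.ofReal (g x))
    (hint : Integrable (fun x =>
      f x * Real.log (f x / (f x + g x)) + g x * Real.log (g x / (f x + g x))) lam) :
    -Real.log 4 ≤
      ∫ x, (f x * Real.log (f x / (f x + g x)) + g x * Real.log (g x / (f x + g x))) ∂lam := by
  -- lintegrals of the densities are 1
  have hflint : ∫⁻ x, ENNReal.ofReal (f x) ∂lam = 1 := by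
    have := (measure_univ (μ := μ))
    rw [hfd, withDensity_apply _ MeasurableSet.univ, setLIntegral_univ] at this
    exact this
  have hglint : ∫⁻ x, ENNReal.ofReal (g x) ∂lam = 1 := by
    have := (measure_univ (μ := ν))
    rw [hgd, withDensity_apply _ MeasurableSet.univ, setLIntegral_univ] at this
    exact this
  -- f and g are integrable with integral 1
  have hfint : Integrable f lam := by
    refine ⟨hf.aestronglyMeasurable, ?_⟩
    rw [hasFiniteIntegral_iff_norm]
    simp only [Real.norm_eq_abs]
    have : ∀ x, ENNReal.ofReal |f x| = ENNReal.ofReal (f x) := fun x => by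
      rw [abs_of_nonneg (hf0 x)]
    simp only [this, hflint]
    exact ENNReal.one_lt_top
  have hgint : Integrable g lam := by
    refine ⟨hg.aestronglyMeasurable, ?_⟩
    rw [hasFiniteIntegral_iff_norm]
    simp only [Real.norm_eq_abs]
    have : ∀ x, ENNReal.ofReal |g x| = ENNReal.ofReal (g x) := fun x => by
      rw [abs_of_nonneg (hg0 x)]
    simp only [this, hglint]
    exact ENNReal.one_lt_top
  have hfI : ∫ x, f x ∂lam = 1 := by
    rw [integral_eq_lintegral_of_nonneg_ae (Filter.Eventually.of_forall hf0)
      hf.aestronglyMeasurable, hflint]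
    simp
  have hgI : ∫ x, g x ∂lam = 1 := by
    rw [integral_eq_lintegral_of_nonneg_ae (Filter.Eventually.of_forall hg0)
      hg.aestronglyMeasurable, hglint]
    simp
  -- compare with the integrable lower bound
  have hlow : Integrable (fun x => -(f x + g x) * Real.log 2) lam :=
    (((hfint.add hgint).neg).mul_const _)
  have hmono : ∫ x, -(f x + g x) * Real.log 2 ∂lam ≤
      ∫ x, (f x * Real.log (f x / (f x + g x)) + g x * Real.log (g x / (f x + g x))) ∂lam :=
    integral_mono hlow hint fun x => gan_pointwise (f x) (g x) (hf0 x) (hg0 x)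
  have hval : ∫ x, -(f x + g x) * Real.log 2 ∂lam = -Real.log 4 := by
    have : (fun x => -(f x + g x) * Real.log 2)
        = fun x => (-(Real.log 2)) * (f x + g x) := by
      funext x; ring
    rw [this, integral_const_mul, integral_add hfint hgint, hfI, hgI]
    have h4 : Real.log 4 = 2 * Real.log 2 := by
      rw [show (4:ℝ) = 2 * 2 by norm_num, Real.log_mul (by norm_num) (by norm_num)]
      ring
    rw [h4]; ring
  linarith
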